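/- Let {P_t}_{t∈T} be a Markov semigroup on a Polish space (X, ρ) with T = [0,∞) which is Feller, strongly continuous on C_b(X), and asymptotically stable with unique invariant measure μ*. If Int(supp μ*) ≠ ∅, then {P_t} satisfies the e-property at every point of X. -/

import Mathlib

open MeasureTheory Filter Topology Metric ENNReal
open scoped Classical

noncomputable section

variable {X : Type*}

/-- A bounded Lipschitz real-valued function. -/
def BddLip [PseudoMetricSpace X] (f : X → ℝ) : Prop :=
  (∃ K, LipschitzWith K f) ∧ ∃ C, ∀ x, |f x| ≤ C

/-- The topological support of a Borel measure:
`{x : μ(B(x,ε)) > 0 for every ε > 0}`. -/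
def msupp [PseudoMetricSpace X] [MeasurableSpace X] (μ : Measure X) : Set X :=
  {x | ∀ ε > 0, 0 < μ (Metric.ball x ε)}

/-! ### Discrete time `T = ℕ₊` -/

/-- Action of a transition kernel family on bounded Borel functions:
`P_n f (x) = ∫ f(y) P_n(x,dy)`. -/
def PfN [MeasurableSpace X] (P : ℕ → X → Measure X) (n : ℕ) (f : X → ℝ) (x : X) : ℝ :=
  ∫ y, f y ∂ P n x

/-- A Markov semigroup indexed by `T = ℕ₊ = {1,2,...}`. -/
def IsMarkovSemigroupN [MeasurableSpace X] (P : ℕ → X → Measure X) : Prop :=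
  (∀ n x, 1 ≤ n → IsProbabilityMeasure (P n x)) ∧
  (∀ (n : ℕ) (A : Set X), 1 ≤ n → MeasurableSet A → Measurable fun x => P n x A) ∧
  ∀ (m n : ℕ) (x : X) (A : Set X), 1 ≤ m → 1 ≤ n → MeasurableSet A →
    P (m + n) x A = ∫⁻ y, P n y A ∂ P m x

/-- The Feller property: each `P_n` maps bounded continuous functions to
bounded continuous functions. -/
def FellerN [MeasurableSpace X] [PseudoMetricSpace X] (P : ℕ → X → Measure X) : Prop :=
  ∀ n, 1 ≤ n → ∀ f : X → ℝ, Continuous f → (∃ C, ∀ x, |f x| ≤ C) →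
    Continuous (fun x => PfN P n f x) ∧ ∃ C, ∀ x, |PfN P n f x| ≤ C

/-- The e-property at a point `z`. -/
def EPropN [MeasurableSpace X] [PseudoMetricSpace X] (P : ℕ → X → Measure X) (z : X) : Prop :=
  ∀ f : X → ℝ, BddLip f → ∀ ε > 0, ∃ δ > 0, ∀ x, dist x z < δ → ∀ n, 1 ≤ n →
    |PfN P n f x - PfN P n f z| < ε

/-- The eventual e-property at a point `z`. -/
def EventualEPropN [MeasurableSpace X] [PseudoMetricSpace X] (P : ℕ → X → Measure X)
    (z : X) : Prop :=
  ∀ f : X → ℝ, BddLip f → ∀ ε > 0, ∃ δ > 0, ∃ n₀ : ℕ, 1 ≤ n₀ ∧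
    ∀ x, dist x z < δ → ∀ n, n₀ ≤ n → |PfN P n f x - PfN P n f z| < ε

/-- Eventual continuity (asymptotic equicontinuity) at a point `z`. -/
def EvContN [MeasurableSpace X] [PseudoMetricSpace X] (P : ℕ → X → Measure X) (z : X) : Prop :=
  ∀ f : X → ℝ, BddLip f → ∀ ε > 0, ∃ δ > 0, ∀ x, dist x z < δ →
    Filter.limsup (fun n => |PfN P n f x - PfN P n f z|) Filter.atTop ≤ ε

/-- Invariance of a measure: `P_n μ = μ` for all `n ∈ ℕ₊`. -/
def InvariantN [MeasurableSpace X] (P : ℕ → X → Measure X) (μ : Measure X) : Prop :=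
  ∀ n, 1 ≤ n → μ.bind (P n) = μ

/-- `μ` is an ergodic invariant measure: it is invariant and every Borel set `A`
with `P_n 1_A = 1_A` μ-a.e. for all `n` has `μ(A) ∈ {0,1}`. -/
def ErgodicMeasN [MeasurableSpace X] (P : ℕ → X → Measure X) (μ : Measure X) : Prop :=
  InvariantN P μ ∧
  ∀ A : Set X, MeasurableSet A →
    (∀ n, 1 ≤ n → ∀ᵐ x ∂μ, P n x A = A.indicator (fun _ => (1 : ℝ≥0∞)) x) →
    μ A = 0 ∨ μ A = 1

/-- Cesàro averages acting on functions: `Q_n f(x) = (1/n) ∑_{k=1}^n P_k f(x)`. -/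
def QfN [MeasurableSpace X] (P : ℕ → X → Measure X) (n : ℕ) (f : X → ℝ) (x : X) : ℝ :=
  (1 / (n : ℝ)) * ∑ k ∈ Finset.Icc 1 n, PfN P k f x

/-- Cesàro averages on sets: `Q_n(x,A) = (1/n) ∑_{k=1}^n P_k(x,A)`. -/
def QsetN [MeasurableSpace X] (P : ℕ → X → Measure X) (n : ℕ) (x : X) (A : Set X) : ℝ≥0∞ :=
  (n : ℝ≥0∞)⁻¹ * ∑ k ∈ Finset.Icc 1 n, P k x A

/-- Asymptotic stability with unique invariant measure `μs`. -/
def AsympStableN [MeasurableSpace X] [PseudoMetricSpace X] (P : ℕ → X → Measure X)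
    (μs : Measure X) : Prop :=
  IsProbabilityMeasure μs ∧ InvariantN P μs ∧
  (∀ ν : Measure X, IsProbabilityMeasure ν → InvariantN P ν → ν = μs) ∧
  ∀ ν : Measure X, IsProbabilityMeasure ν → ∀ f : X → ℝ, Continuous f →
    (∃ C, ∀ x, |f x| ≤ C) →
    Tendsto (fun n => ∫ y, f y ∂ (ν.bind (P n))) atTop (𝓝 (∫ y, f y ∂ μs))

/-! ### Continuous time `T = [0,∞)` -/

/-- Action on bounded Borel functions, continuous time. -/
def PfR [MeasurableSpace X] (P : ℝ → X → Measure X) (t : ℝ) (f : X → ℝ) (x : X) : ℝ :=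
  ∫ y, f y ∂ P t x

/-- A Markov semigroup indexed by `T = [0,∞)`, with `P_0(x,·) = δ_x`. -/
def IsMarkovSemigroupR [MeasurableSpace X] (P : ℝ → X → Measure X) : Prop :=
  (∀ t x, 0 ≤ t → IsProbabilityMeasure (P t x)) ∧
  (∀ (t : ℝ) (A : Set X), 0 ≤ t → MeasurableSet A → Measurable fun x => P t x A) ∧
  (∀ x, P 0 x = Measure.dirac x) ∧
  ∀ (s t : ℝ) (x : X) (A : Set X), 0 ≤ s → 0 ≤ t → MeasurableSet A →
    P (s + t) x A = ∫⁻ y, P t y A ∂ P s x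

/-- Joint time-measurability: `s ↦ P_s(x,A)` is Borel measurable. -/
def TimeMeasR [MeasurableSpace X] (P : ℝ → X → Measure X) : Prop :=
  ∀ (x : X) (A : Set X), MeasurableSet A → Measurable fun s : ℝ => P s x A

/-- The Feller property, continuous time. -/
def FellerR [MeasurableSpace X] [PseudoMetricSpace X] (P : ℝ → X → Measure X) : Prop :=
  ∀ t : ℝ, 0 ≤ t → ∀ f : X → ℝ, Continuous f → (∃ C, ∀ x, |f x| ≤ C) →
    Continuous (fun x => PfR P t f x) ∧ ∃ C, ∀ x, |PfR P t f x| ≤ C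

/-- Strong continuity on `C_b(X)`: `sup_x |P_t f(x) - f(x)| → 0` as `t ↓ 0`. -/
def StrongContR [MeasurableSpace X] [PseudoMetricSpace X] (P : ℝ → X → Measure X) : Prop :=
  ∀ f : X → ℝ, Continuous f → (∃ C, ∀ x, |f x| ≤ C) →
    ∀ ε > 0, ∃ η > 0, ∀ t : ℝ, 0 < t → t < η → ∀ x, |PfR P t f x - f x| < ε

/-- The e-property at a point `z`, continuous time. -/
def EPropR [MeasurableSpace X] [PseudoMetricSpace X] (P : ℝ → X → Measure X) (z : X) : Prop :=
  ∀ f : X → ℝ, BddLip f → ∀ ε > 0, ∃ δ > 0, ∀ x, dist x z < δ → ∀ t : ℝ, 0 ≤ t →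
    |PfR P t f x - PfR P t f z| < ε

/-- The eventual e-property at a point `z`, continuous time. -/
def EventualEPropR [MeasurableSpace X] [PseudoMetricSpace X] (P : ℝ → X → Measure X)
    (z : X) : Prop :=
  ∀ f : X → ℝ, BddLip f → ∀ ε > 0, ∃ δ > 0, ∃ t₀ : ℝ, 0 ≤ t₀ ∧
    ∀ x, dist x z < δ → ∀ t : ℝ, t₀ ≤ t → |PfR P t f x - PfR P t f z| < ε

/-- Eventual continuity at `z`, continuous time. -/
def EvContR [MeasurableSpace X] [PseudoMetricSpace X] (P : ℝ → X → Measure X) (z : X) : Prop :=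
  ∀ f : X → ℝ, BddLip f → ∀ ε > 0, ∃ δ > 0, ∀ x, dist x z < δ →
    Filter.limsup (fun t : ℝ => |PfR P t f x - PfR P t f z|) Filter.atTop ≤ ε

/-- Invariance, continuous time. -/
def InvariantR [MeasurableSpace X] (P : ℝ → X → Measure X) (μ : Measure X) : Prop :=
  ∀ t : ℝ, 0 ≤ t → μ.bind (P t) = μ

/-- Ergodic invariant measure, continuous time. -/
def ErgodicMeasR [MeasurableSpace X] (P : ℝ → X → Measure X) (μ : Measure X) : Prop :=
  InvariantR P μ ∧
  ∀ A : Set X, MeasurableSet A →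
    (∀ t : ℝ, 0 ≤ t → ∀ᵐ x ∂μ, P t x A = A.indicator (fun _ => (1 : ℝ≥0∞)) x) →
    μ A = 0 ∨ μ A = 1

/-- Cesàro averages acting on functions: `Q_t f(x) = (1/t) ∫_0^t P_s f(x) ds`. -/
def QfR [MeasurableSpace X] (P : ℝ → X → Measure X) (t : ℝ) (f : X → ℝ) (x : X) : ℝ :=
  (1 / t) * ∫ s in Set.Ioc (0 : ℝ) t, PfR P s f x

/-- Cesàro averages on sets: `Q_t(x,A) = (1/t) ∫_0^t P_s(x,A) ds`. -/
def QsetR [MeasurableSpace X] (P : ℝ → X → Measure X) (t : ℝ) (x : X) (A : Set X) : ℝ≥0∞ :=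
  ENNReal.ofReal (1 / t) * ∫⁻ s in Set.Ioc (0 : ℝ) t, P s x A

/-- Asymptotic stability, continuous time. -/
def AsympStableR [MeasurableSpace X] [PseudoMetricSpace X] (P : ℝ → X → Measure X)
    (μs : Measure X) : Prop :=
  IsProbabilityMeasure μs ∧ InvariantR P μs ∧
  (∀ ν : Measure X, IsProbabilityMeasure ν → InvariantR P ν → ν = μs) ∧
  ∀ ν : Measure X, IsProbabilityMeasure ν → ∀ f : X → ℝ, Continuous f →
    (∃ C, ∀ x, |f x| ≤ C) →
    Tendsto (fun t : ℝ => ∫ y, f y ∂ (ν.bind (P t))) atTop (𝓝 (∫ y, f y ∂ μs))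

end

/-! ### Auxiliary machinery added for the proof -/

section StmtAuxHelpers

namespace StmtAux

open MeasureTheory Filter Topology Metric ENNReal

variable {X : Type*} [MeasurableSpace X]

lemma nonempty_of_prob (μ : Measure X) [IsProbabilityMeasure μ] : Nonempty X := by
  by_contra h
  rw [not_nonempty_iff] at h
  have h1 : μ Set.univ = 1 := measure_univ
  rw [Set.univ_eq_empty_iff.mpr h, measure_empty] at h1
  exact zero_ne_one h1

lemma integrable_of_bdd {μ : Measure X} [IsFiniteMeasure μ] {g : X → ℝ} {C : ℝ}
    (hg : Measurable g) (hb : ∀ x, |g x| ≤ C) : Integrable g μ :=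
  (integrable_const C).mono' hg.aestronglyMeasurable
    (Filter.Eventually.of_forall (fun x => by simpa using hb x))

lemma abs_integral_le {μ : Measure X} [IsProbabilityMeasure μ] {g : X → ℝ} {C : ℝ}
    (hb : ∀ x, |g x| ≤ C) : |∫ x, g x ∂μ| ≤ C := by
  have := norm_integral_le_of_norm_le_const (μ := μ) (f := g) (C := C)
    (Filter.Eventually.of_forall (fun x => by simpa using hb x))
  simpa [Real.norm_eq_abs] using this

lemma integral_bind_nn {μ : Measure X} [IsProbabilityMeasure μ] {κ : X → Measure X}
    (hκ : Measurable κ) (hκp : ∀ y, IsProbabilityMeasure (κ y)) {g : X → ℝ} {C : ℝ}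
    (hg : Measurable g) (h0 : ∀ x, 0 ≤ g x) (hb : ∀ x, g x ≤ C) :
    ∫ v, g v ∂(μ.bind κ) = ∫ y, ∫ v, g v ∂(κ y) ∂μ := by
  have hfin : ∀ ν : Measure X, IsProbabilityMeasure ν →
      ∫⁻ v, ENNReal.ofReal (g v) ∂ν ≤ ENNReal.ofReal C := by
    intro ν hν
    calc ∫⁻ v, ENNReal.ofReal (g v) ∂ν ≤ ∫⁻ _, ENNReal.ofReal C ∂ν :=
          lintegral_mono fun v => ENNReal.ofReal_le_ofReal (hb v)
      _ = ENNReal.ofReal C := by simp [lintegral_const, measure_univ]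
  have hbind : IsProbabilityMeasure (μ.bind κ) := by
    constructor
    rw [Measure.bind_apply MeasurableSet.univ hκ.aemeasurable]
    simp [measure_univ]
  haveI := hbind
  have hinner : ∀ y, ∫⁻ v, ENNReal.ofReal (g v) ∂(κ y) = ENNReal.ofReal (∫ v, g v ∂(κ y)) := by
    intro y
    haveI := hκp y
    rw [integral_eq_lintegral_of_nonneg_ae (Filter.Eventually.of_forall h0)
      hg.aestronglyMeasurable]
    exact (ENNReal.ofReal_toReal (lt_of_le_of_lt (hfin _ (hκp y)) ENNReal.ofReal_lt_top).ne).symm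
  have hmeasF : Measurable fun y => ∫ v, g v ∂(κ y) := by
    have h1 : Measurable fun y => ∫⁻ v, ENNReal.ofReal (g v) ∂(κ y) :=
      (Measure.measurable_lintegral hg.ennreal_ofReal).comp hκ
    have : (fun y => ∫ v, g v ∂(κ y)) =
        fun y => (∫⁻ v, ENNReal.ofReal (g v) ∂(κ y)).toReal := by
      funext y
      haveI := hκp y
      rw [integral_eq_lintegral_of_nonneg_ae (Filter.Eventually.of_forall h0)
        hg.aestronglyMeasurable]
    rw [this]
    exact h1.ennreal_toReal
  rw [integral_eq_lintegral_of_nonneg_ae (Filter.Eventually.of_forall h0)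
    hg.aestronglyMeasurable,
    Measure.lintegral_bind hκ.aemeasurable hg.ennreal_ofReal.aemeasurable]
  rw [integral_eq_lintegral_of_nonneg_ae
    (Filter.Eventually.of_forall (fun y => integral_nonneg h0)) hmeasF.aestronglyMeasurable]
  congr 1
  exact lintegral_congr hinner

lemma integral_bind_bdd {μ : Measure X} [IsProbabilityMeasure μ] {κ : X → Measure X}
    (hκ : Measurable κ) (hκp : ∀ y, IsProbabilityMeasure (κ y)) {g : X → ℝ} {C : ℝ}
    (hg : Measurable g) (hb : ∀ x, |g x| ≤ C) :
    ∫ v, g v ∂(μ.bind κ) = ∫ y, ∫ v, g v ∂(κ y) ∂μ := by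
  have hbind : IsProbabilityMeasure (μ.bind κ) := by
    constructor
    rw [Measure.bind_apply MeasurableSet.univ hκ.aemeasurable]
    simp [measure_univ]
  haveI := hbind
  have h0 : ∀ x, 0 ≤ g x + C := fun x => by
    have := (abs_le.mp (hb x)).1; linarith
  have hb' : ∀ x, g x + C ≤ C + C := fun x => by
    have := (abs_le.mp (hb x)).2; linarith
  have key := integral_bind_nn (μ := μ) hκ hκp (g := fun v => g v + C) (C := C + C)
    (hg.add measurable_const) h0 hb'
  have hIg : ∀ (ν : Measure X), IsProbabilityMeasure ν → Integrable g ν := by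
    intro ν hν; haveI := hν; exact integrable_of_bdd hg hb
  have expand : ∀ (ν : Measure X), IsProbabilityMeasure ν →
      ∫ v, (g v + C) ∂ν = ∫ v, g v ∂ν + C := by
    intro ν hν; haveI := hν
    rw [integral_add (hIg ν hν) (integrable_const C), integral_const]
    simp [measure_univ]
  rw [expand _ hbind] at key
  have expand2 : ∫ y, ∫ v, (g v + C) ∂(κ y) ∂μ = ∫ y, (∫ v, g v ∂(κ y) + C) ∂μ := by
    apply integral_congr_ae
    exact Filter.Eventually.of_forall (fun y => expand _ (hκp y))
  rw [expand2] at key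
  have hmeasF : Measurable fun y => ∫ v, g v ∂(κ y) := by
    have h1 : Measurable fun y => ∫ v, (g v + C) ∂(κ y) := by
      have h2 : Measurable fun y => ∫⁻ v, ENNReal.ofReal (g v + C) ∂(κ y) :=
        (Measure.measurable_lintegral (hg.add measurable_const).ennreal_ofReal).comp hκ
      have : (fun y => ∫ v, (g v + C) ∂(κ y)) =
          fun y => (∫⁻ v, ENNReal.ofReal (g v + C) ∂(κ y)).toReal := by
        funext y
        haveI := hκp y
        rw [integral_eq_lintegral_of_nonneg_ae (Filter.Eventually.of_forall h0)
          (hg.add measurable_const).aestronglyMeasurable]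
      rw [this]
      exact h2.ennreal_toReal
    have : (fun y => ∫ v, g v ∂(κ y)) = fun y => (∫ v, (g v + C) ∂(κ y)) - C := by
      funext y; rw [expand _ (hκp y)]; ring
    rw [this]
    exact h1.sub measurable_const
  have hIF : Integrable (fun y => ∫ v, g v ∂(κ y)) μ := by
    apply integrable_of_bdd hmeasF (C := C)
    intro y
    haveI := hκp y
    exact abs_integral_le hb
  rw [integral_add hIF (integrable_const C), integral_const] at key
  simp only [measure_univ, ENNReal.toReal_one, probReal_univ, one_mul, one_smul, smul_eq_mul] at key
  linarith

end StmtAux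

namespace StmtSgp

open MeasureTheory Filter Topology Metric ENNReal

variable {X : Type*} [MetricSpace X] [MeasurableSpace X] [BorelSpace X]
variable {P : ℝ → X → Measure X}

lemma meas_kernel (hP : IsMarkovSemigroupR P) {t : ℝ} (ht : 0 ≤ t) : Measurable (P t) :=
  Measure.measurable_of_measurable_coe _ (fun s hs => hP.2.1 t s ht hs)

lemma prob_kernel (hP : IsMarkovSemigroupR P) {t : ℝ} (ht : 0 ≤ t) (x : X) :
    IsProbabilityMeasure (P t x) := hP.1 t x ht

lemma CK_bind (hP : IsMarkovSemigroupR P) {s t : ℝ} (hs : 0 ≤ s) (ht : 0 ≤ t) (x : X) :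
    P (s + t) x = (P s x).bind (P t) := by
  apply Measure.ext
  intro A hA
  rw [Measure.bind_apply hA (meas_kernel hP ht).aemeasurable]
  exact hP.2.2.2 s t x A hs ht hA

lemma PfR_bdd (hP : IsMarkovSemigroupR P) {t : ℝ} (ht : 0 ≤ t) {g : X → ℝ} {C : ℝ}
    (hb : ∀ x, |g x| ≤ C) (x : X) : |PfR P t g x| ≤ C := by
  haveI := prob_kernel hP ht x
  exact StmtAux.abs_integral_le hb

lemma PfR_add (hP : IsMarkovSemigroupR P) {s t : ℝ} (hs : 0 ≤ s) (ht : 0 ≤ t)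
    {g : X → ℝ} {C : ℝ} (hgc : Continuous g) (hb : ∀ x, |g x| ≤ C) (x : X) :
    PfR P (s + t) g x = PfR P s (fun y => PfR P t g y) x := by
  haveI := prob_kernel hP hs x
  show (∫ v, g v ∂ P (s+t) x) = _
  rw [CK_bind hP hs ht x]
  exact StmtAux.integral_bind_bdd (μ := P s x) (meas_kernel hP ht)
    (fun y => prob_kernel hP ht y) hgc.measurable hb

lemma tendsto_PfR (hP : IsMarkovSemigroupR P) {μs : Measure X} (hstab : AsympStableR P μs)
    {g : X → ℝ} {C : ℝ} (hgc : Continuous g) (hb : ∀ x, |g x| ≤ C) (x : X) :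
    Tendsto (fun t : ℝ => PfR P t g x) atTop (𝓝 (∫ v, g v ∂μs)) := by
  have h := hstab.2.2.2 (Measure.dirac x) inferInstance g hgc ⟨C, hb⟩
  refine Filter.Tendsto.congr' ?_ h
  filter_upwards [eventually_ge_atTop (0:ℝ)] with t ht
  rw [Measure.dirac_bind (meas_kernel hP ht)]
  rfl

lemma PfR_hop (hP : IsMarkovSemigroupR P) (hFeller : FellerR P) {t₀ s : ℝ}
    (ht₀ : 0 ≤ t₀) (hs : 0 ≤ s)
    {g : X → ℝ} {C : ℝ} (hgc : Continuous g) (hb : ∀ x, |g x| ≤ C) {ε : ℝ}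
    (hε : ∀ v, |PfR P s g v - g v| ≤ ε) (y : X) :
    |PfR P (t₀ + s) g y - PfR P t₀ g y| ≤ ε := by
  rw [PfR_add hP ht₀ hs hgc hb y]
  haveI := prob_kernel hP ht₀ y
  have hPsg : Continuous fun v => PfR P s g v := (hFeller s hs g hgc ⟨C, hb⟩).1
  have hIg : Integrable g (P t₀ y) := StmtAux.integrable_of_bdd hgc.measurable hb
  have hIPsg : Integrable (fun v => PfR P s g v) (P t₀ y) :=
    StmtAux.integrable_of_bdd hPsg.measurable (C := C) (fun v => PfR_bdd hP hs hb v)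
  have : PfR P t₀ (fun v => PfR P s g v) y - PfR P t₀ g y
      = ∫ v, (PfR P s g v - g v) ∂ P t₀ y := by
    show (∫ v, PfR P s g v ∂ _) - (∫ v, g v ∂ _) = _
    rw [integral_sub hIPsg hIg]
  rw [this]
  exact StmtAux.abs_integral_le hε

end StmtSgp


namespace StmtU

open MeasureTheory Filter Topology Metric ENNReal StmtSgp

variable {X : Type*} [MetricSpace X] [MeasurableSpace X] [BorelSpace X]

/-- The set of asymptotic oscillation bounds near `x`. -/
def AAset (P : ℝ → X → Measure X) (f : X → ℝ) (c : ℝ) (x : X) : Set ℝ :=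
  {a | ∃ δ > (0:ℝ), ∃ T : ℝ, ∀ t ≥ T, ∀ y ∈ Metric.ball x δ, |PfR P t f y - c| ≤ a}

/-- The asymptotic local oscillation function. -/
noncomputable def uFn (P : ℝ → X → Measure X) (f : X → ℝ) (c : ℝ) (x : X) : ℝ :=
  sInf (AAset P f c x)

lemma AAset_bddBelow (P : ℝ → X → Measure X) (f : X → ℝ) (c : ℝ) (x : X) :
    BddBelow (AAset P f c x) := by
  refine ⟨0, fun a ha => ?_⟩
  obtain ⟨δ, hδ, T, hbd⟩ := ha
  exact le_trans (abs_nonneg _) (hbd T le_rfl x (mem_ball_self hδ))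

lemma AAset_mem_of_le {P : ℝ → X → Measure X} {f : X → ℝ} {c : ℝ} {x : X} {a a' : ℝ}
    (ha : a ∈ AAset P f c x) (h : a ≤ a') : a' ∈ AAset P f c x := by
  obtain ⟨δ, hδ, T, hbd⟩ := ha
  exact ⟨δ, hδ, T, fun t ht y hy => le_trans (hbd t ht y hy) h⟩

lemma uFn_nonneg (P : ℝ → X → Measure X) (f : X → ℝ) (c : ℝ) (x : X)
    (hne : (AAset P f c x).Nonempty) : 0 ≤ uFn P f c x := by
  refine le_csInf hne (fun a ha => ?_)
  obtain ⟨δ, hδ, T, hbd⟩ := ha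
  exact le_trans (abs_nonneg _) (hbd T le_rfl x (mem_ball_self hδ))

lemma isOpen_uFn_lt {P : ℝ → X → Measure X} {f : X → ℝ} {c : ℝ} {a : ℝ}
    (hne : ∀ x : X, (AAset P f c x).Nonempty) :
    IsOpen {x : X | uFn P f c x < a} := by
  rw [Metric.isOpen_iff]
  intro v hv
  obtain ⟨a', ha'mem, ha'lt⟩ := exists_lt_of_csInf_lt (hne v) hv
  obtain ⟨δ, hδ, T, hbd⟩ := ha'mem
  refine ⟨δ/2, by linarith, fun y hy => ?_⟩
  have hmem : a' ∈ AAset P f c y := by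
    refine ⟨δ/2, by linarith, T, fun t ht w hw => hbd t ht w ?_⟩
    have h1 : dist w v ≤ dist w y + dist y v := dist_triangle w y v
    rw [mem_ball] at hw hy ⊢
    linarith
  exact lt_of_le_of_lt (csInf_le (AAset_bddBelow P f c y) hmem) ha'lt

lemma dense_uFn_lt [CompleteSpace X]
    {P : ℝ → X → Measure X} (hP : IsMarkovSemigroupR P) (hFeller : FellerR P)
    {μs : Measure X} (hstab : AsympStableR P μs)
    {f : X → ℝ} {C₀ : ℝ} (hf : Continuous f) (hfb : ∀ x, |f x| ≤ C₀)
    {a : ℝ} (ha : 0 < a) :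
    Dense {x : X | uFn P f (∫ v, f v ∂μs) x < a} := by
  set c := ∫ v, f v ∂μs with hc_def
  set A : ℕ → Set X := fun N => {x | ∀ s ≥ (N:ℝ), ∀ t ≥ (N:ℝ),
    |PfR P s f x - PfR P t f x| ≤ a/4} with hA_def
  have hclosed : ∀ N, IsClosed (A N) := by
    intro N
    have hrw : A N = ⋂ (s : ℝ) (_ : (N:ℝ) ≤ s) (t : ℝ) (_ : (N:ℝ) ≤ t),
        {x | |PfR P s f x - PfR P t f x| ≤ a/4} := by
      ext x
      simp only [hA_def, Set.mem_setOf_eq, Set.mem_iInter]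
    rw [hrw]
    refine isClosed_iInter fun s => isClosed_iInter fun hs =>
      isClosed_iInter fun t => isClosed_iInter fun ht => ?_
    have hs0 : (0:ℝ) ≤ s := le_trans (Nat.cast_nonneg N) hs
    have ht0 : (0:ℝ) ≤ t := le_trans (Nat.cast_nonneg N) ht
    have hcs : Continuous fun x => PfR P s f x := (hFeller s hs0 f hf ⟨C₀, hfb⟩).1
    have hct : Continuous fun x => PfR P t f x := (hFeller t ht0 f hf ⟨C₀, hfb⟩).1
    exact isClosed_le ((hcs.sub hct).abs) continuous_const
  have hcover : ⋃ N, A N = Set.univ := by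
    rw [Set.eq_univ_iff_forall]
    intro x
    have ht := tendsto_PfR hP hstab hf hfb x
    rw [Metric.tendsto_atTop] at ht
    obtain ⟨T, hT⟩ := ht (a/8) (by linarith)
    refine Set.mem_iUnion.mpr ⟨⌈max T 0⌉₊, fun s hs t ht' => ?_⟩
    have hTle : max T 0 ≤ (⌈max T 0⌉₊ : ℝ) := Nat.le_ceil _
    have h1 : dist (PfR P s f x) c < a/8 :=
      hT s (le_trans (le_trans (le_max_left T 0) hTle) hs)
    have h2 : dist (PfR P t f x) c < a/8 :=
      hT t (le_trans (le_trans (le_max_left T 0) hTle) ht')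
    rw [Real.dist_eq] at h1 h2
    have h3 : |PfR P s f x - PfR P t f x| ≤ |PfR P s f x - c| + |PfR P t f x - c| := by
      have := abs_sub (PfR P s f x - c) (PfR P t f x - c)
      calc |PfR P s f x - PfR P t f x| = |(PfR P s f x - c) - (PfR P t f x - c)| := by ring_nf
        _ ≤ |PfR P s f x - c| + |PfR P t f x - c| := abs_sub _ _
    linarith
  have hdense := dense_iUnion_interior_of_closed hclosed hcover
  refine Dense.mono ?_ hdense
  intro v hv
  simp only [Set.mem_iUnion] at hv
  obtain ⟨N, hN⟩ := hv
  obtain ⟨ε, hεpos, hball⟩ := Metric.mem_nhds_iff.mp (mem_interior_iff_mem_nhds.mp hN)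
  have hmem : (a/4) ∈ AAset P f c v := by
    refine ⟨ε, hεpos, (N:ℝ), fun t ht y hy => ?_⟩
    have hyA : y ∈ A N := hball hy
    have hlim : Tendsto (fun s : ℝ => |PfR P t f y - PfR P s f y|) atTop
        (𝓝 |PfR P t f y - c|) :=
      (tendsto_const_nhds.sub (tendsto_PfR hP hstab hf hfb y)).abs
    refine le_of_tendsto hlim ?_
    filter_upwards [eventually_ge_atTop (N:ℝ)] with s hs
    have := hyA s hs t ht
    rwa [abs_sub_comm]
  have hle : uFn P f c v ≤ a/4 := csInf_le (AAset_bddBelow P f c v) hmem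
  show uFn P f c v < a
  linarith

end StmtU


namespace StmtU

open MeasureTheory Filter Topology Metric ENNReal StmtSgp

variable {X : Type*} [MetricSpace X] [MeasurableSpace X] [BorelSpace X]

lemma arith_bound {G B Ct S η M θ κ T1 Ψv : ℝ}
    (hΨ : Ψv = T1 + M*(1-Ct))
    (hT1 : T1 ≤ (S/2 + η)*G + (S+η)*B)
    (hsplit : G + B = Ct) (hCt1 : Ct ≤ 1) (hCtge : 1 - θ ≤ Ct)
    (hG0 : 0 ≤ G) (hB0 : 0 ≤ B) (hGge : κ - 2*θ ≤ G)
    (hS : 0 < S) (hη : 0 < η) (hM : 0 ≤ M) :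
    Ψv ≤ η + M*θ + S - (κ - 2*θ)*(S/2) := by
  have h1 : η*G + η*B = η*Ct := by rw [← hsplit]; ring
  have h2 : η*Ct ≤ η := by
    have := mul_le_mul_of_nonneg_left hCt1 (le_of_lt hη); linarith
  have h3 : S*B = S*Ct - S*G := by rw [← hsplit]; ring
  have h4 : S*Ct ≤ S := by
    have := mul_le_mul_of_nonneg_left hCt1 (le_of_lt hS); linarith
  have h5 : (κ-2*θ)*(S/2) ≤ G*(S/2) := mul_le_mul_of_nonneg_right hGge (by linarith)
  have h6 : M*(1-Ct) ≤ M*θ := mul_le_mul_of_nonneg_left (by linarith) hM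
  have h7 : (S/2 + η)*G + (S+η)*B = G*(S/2) + (η*G + η*B) + S*B := by ring
  have h8 : S*G = 2*(G*(S/2)) := by ring
  linarith

set_option maxHeartbeats 2000000 in
theorem uFn_le_zero [CompleteSpace X] [TopologicalSpace.SeparableSpace X]
    {P : ℝ → X → Measure X} (hP : IsMarkovSemigroupR P) (hFeller : FellerR P)
    {μs : Measure X} (hstab : AsympStableR P μs)
    (hint : (interior (msupp μs)).Nonempty)
    {f : X → ℝ} {C₀ : ℝ} (hf : Continuous f) (hfb : ∀ x, |f x| ≤ C₀) :
    ∀ x : X, uFn P f (∫ v, f v ∂μs) x ≤ 0 := by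
  haveI hμprob : IsProbabilityMeasure μs := hstab.1
  haveI : Nonempty X := StmtAux.nonempty_of_prob μs
  set c := ∫ v, f v ∂μs with hc_def
  have hcb : |c| ≤ C₀ := StmtAux.abs_integral_le hfb
  set M := C₀ + C₀ with hM_def
  have hC₀0 : 0 ≤ C₀ := le_trans (abs_nonneg c) hcb
  have hM0 : 0 ≤ M := by rw [hM_def]; linarith
  have hd_bdd : ∀ t : ℝ, 0 ≤ t → ∀ y, |PfR P t f y - c| ≤ M := by
    intro t ht y
    have h1 := PfR_bdd hP ht hfb y
    calc |PfR P t f y - c| ≤ |PfR P t f y| + |c| := abs_sub _ _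
      _ ≤ C₀ + C₀ := add_le_add h1 hcb
  have hMmem : ∀ x, M ∈ AAset P f c x :=
    fun x => ⟨1, one_pos, 0, fun t ht y _ => hd_bdd t ht y⟩
  have hne : ∀ x : X, (AAset P f c x).Nonempty := fun x => ⟨M, hMmem x⟩
  have hu0 : ∀ x, 0 ≤ uFn P f c x := fun x => uFn_nonneg P f c x (hne x)
  have huM : ∀ x, uFn P f c x ≤ M := fun x => csInf_le (AAset_bddBelow P f c x) (hMmem x)
  have hbddS : BddAbove (Set.range (uFn P f c)) := by
    refine ⟨M, ?_⟩; rintro _ ⟨x, rfl⟩; exact huM x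
  set S := ⨆ x, uFn P f c x with hS_def
  intro x₀
  by_contra hcon
  push_neg at hcon
  have hSpos : 0 < S := lt_of_lt_of_le hcon (le_ciSup hbddS x₀)
  have hSle : ∀ x, uFn P f c x ≤ S := fun x => le_ciSup hbddS x
  have hSM : S ≤ M := ciSup_le huM
  set a := S/2 with ha_def
  have hapos : 0 < a := by rw [ha_def]; linarith
  have halta : a < S := by rw [ha_def]; linarith
  -- the dense open set where u < a
  have hWdense : Dense {x : X | uFn P f c x < a} := dense_uFn_lt hP hFeller hstab hf hfb hapos
  have hWopen : IsOpen {x : X | uFn P f c x < a} := isOpen_uFn_lt hne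
  -- pick p in W ∩ interior of support, and radius r₀
  obtain ⟨p, hpW, hpInt⟩ : ∃ p, p ∈ {x : X | uFn P f c x < a} ∧ p ∈ interior (msupp μs) := by
    obtain ⟨q, hq⟩ := hint
    obtain ⟨p, hp1, hp2⟩ := hWdense.exists_mem_open isOpen_interior ⟨q, hq⟩
    exact ⟨p, hp1, hp2⟩
  have hopen2 : IsOpen ({x : X | uFn P f c x < a} ∩ interior (msupp μs)) :=
    hWopen.inter isOpen_interior
  obtain ⟨r₁, hr₁pos, hr₁sub⟩ := Metric.isOpen_iff.mp hopen2 p ⟨hpW, hpInt⟩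
  set r₀ := r₁/2 with hr₀_def
  have hr₀pos : 0 < r₀ := by rw [hr₀_def]; linarith
  have hball2 : ∀ v : X, dist v p < 2*r₀ → uFn P f c v < a := by
    intro v hv
    have : v ∈ ball p r₁ := by rw [mem_ball]; rw [hr₀_def] at hv; linarith
    exact (hr₁sub this).1
  have hpsupp : p ∈ msupp μs := interior_subset hpInt
  have hκpos' : 0 < μs (ball p r₀) := hpsupp r₀ hr₀pos
  set κ := (μs (ball p r₀)).toReal with hκ_def
  have hκpos : 0 < κ := ENNReal.toReal_pos hκpos'.ne' (measure_ne_top μs _)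
  -- the bump function g
  set g : X → ℝ := fun v => max 0 (min 1 (3 - (2/r₀) * dist v p)) with hg_def
  have hgcont : Continuous g := by
    apply continuous_const.max
    apply continuous_const.min
    exact continuous_const.sub (continuous_const.mul (continuous_id.dist continuous_const))
  have hg0 : ∀ v, 0 ≤ g v := fun v => le_max_left 0 _
  have hg1' : ∀ v, g v ≤ 1 := fun v => max_le zero_le_one (min_le_left 1 _)
  have hgb : ∀ v, |g v| ≤ 1 := fun v => abs_le.mpr ⟨by linarith [hg0 v], hg1' v⟩
  have hg1 : ∀ v, dist v p < r₀ → g v = 1 := by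
    intro v hv
    have h2 : (2/r₀) * dist v p ≤ 2 := by
      have : (2/r₀) * dist v p ≤ (2/r₀) * r₀ :=
        mul_le_mul_of_nonneg_left (le_of_lt hv) (by positivity)
      rwa [div_mul_cancel₀ (2:ℝ) hr₀pos.ne'] at this
    have h3 : (1:ℝ) ≤ 3 - (2/r₀) * dist v p := by linarith
    rw [hg_def]
    simp only []
    rw [min_eq_left h3, max_eq_right zero_le_one]
  have hgsupp : ∀ v, g v ≠ 0 → dist v p < 3*r₀/2 := by
    intro v hv
    by_contra h
    push_neg at h
    have h2 : 3 - (2/r₀) * dist v p ≤ 0 := by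
      have : (2/r₀) * (3*r₀/2) ≤ (2/r₀) * dist v p :=
        mul_le_mul_of_nonneg_left h (by positivity)
      have h3 : (2/r₀) * (3*r₀/2) = 3 := by field_simp
      linarith [h3 ▸ this]
    apply hv
    rw [hg_def]
    simp only []
    rw [max_eq_left (min_le_of_right_le h2)]
  have hgint : κ ≤ ∫ v, g v ∂μs := by
    have hind : ∀ v, Set.indicator (ball p r₀) (fun _ => (1:ℝ)) v ≤ g v := by
      intro v
      by_cases hv : v ∈ ball p r₀
      · rw [Set.indicator_of_mem hv]
        rw [mem_ball] at hv
        exact le_of_eq (hg1 v hv).symm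
      · rw [Set.indicator_of_notMem hv]
        exact hg0 v
    have h1 : κ = ∫ v, Set.indicator (ball p r₀) (fun _ => (1:ℝ)) v ∂μs := by
      rw [hκ_def]
      exact (integral_indicator_one measurableSet_ball).symm
    rw [h1]
    exact integral_mono ((integrable_const (1:ℝ)).indicator measurableSet_ball)
      (StmtAux.integrable_of_bdd hgcont.measurable hgb) hind
  -- small parameters
  set σ := κ*S/32 with hσ_def
  set η := κ*S/16 with hη_def
  set θ := min (κ/4) (κ*S/(16*(M+1))) with hθ_def
  have hσpos : 0 < σ := by rw [hσ_def]; positivity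
  have hηpos : 0 < η := by rw [hη_def]; positivity
  have hθpos : 0 < θ := by
    rw [hθ_def]; apply lt_min (by positivity); positivity
  have hθκ : θ ≤ κ/4 := min_le_left _ _
  have hθM : M * θ ≤ κ*S/16 := by
    have h1 : θ ≤ κ*S/(16*(M+1)) := min_le_right _ _
    have h2 : M * θ ≤ M * (κ*S/(16*(M+1))) := mul_le_mul_of_nonneg_left h1 hM0
    have h3 : M * (κ*S/(16*(M+1))) ≤ κ*S/16 := by
      rw [← mul_div_assoc, div_le_div_iff₀ (by positivity) (by norm_num : (0:ℝ) < 16)]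
      have hκS : 0 ≤ κ * S := by positivity
      nlinarith [hκS, hM0]
    linarith
  -- near-supremum point
  obtain ⟨xs, hxs⟩ : ∃ xs : X, S - σ < uFn P f c xs := by
    have h1 : S - σ < ⨆ x, uFn P f c x := by rw [← hS_def]; linarith
    obtain ⟨xs, hxs⟩ := exists_lt_of_lt_ciSup h1
    exact ⟨xs, hxs⟩
  -- the time m
  obtain ⟨m, hm0, hmg⟩ : ∃ m : ℝ, 0 ≤ m ∧ κ - θ < PfR P m g xs := by
    have htend := tendsto_PfR hP hstab hgcont hgb xs
    have hlt : κ - θ < ∫ v, g v ∂μs := lt_of_lt_of_le (by linarith) hgint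
    have hev : ∀ᶠ t : ℝ in atTop, κ - θ < PfR P t g xs :=
      htend.eventually (eventually_gt_nhds hlt)
    obtain ⟨m₀, hm₀⟩ := eventually_atTop.mp hev
    exact ⟨max m₀ 0, le_max_right _ _, hm₀ _ (le_max_left _ _)⟩
  haveI hPmxs : IsProbabilityMeasure (P m xs) := prob_kernel hP hm0 xs
  -- choice of localization data at every point
  have hchoice : ∀ ξ : X, ∃ δ : ℝ, ∃ T : ℝ, (0 < δ ∧ δ ≤ r₀/2) ∧ 0 ≤ T ∧
      ∀ t ≥ T, ∀ y ∈ ball ξ δ, |PfR P t f y - c| ≤ uFn P f c ξ + η := by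
    intro ξ
    have hlt : sInf (AAset P f c ξ) < uFn P f c ξ + η := by
      have : uFn P f c ξ < uFn P f c ξ + η := by linarith
      exact this
    obtain ⟨a', ha'mem, ha'lt⟩ := exists_lt_of_csInf_lt (hne ξ) hlt
    obtain ⟨δ', hδ', T', hbd⟩ := ha'mem
    refine ⟨min δ' (r₀/2), max T' 0, ⟨lt_min hδ' (by positivity), min_le_right _ _⟩,
      le_max_right _ _, fun t ht y hy => ?_⟩
    have h1 : y ∈ ball ξ δ' := ball_subset_ball (min_le_left _ _) hy
    exact le_trans (hbd t (le_trans (le_max_left _ _) ht) y h1) (le_of_lt ha'lt)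
  choose δf Tf hδf hTf hbdf using hchoice
  -- Lindelöf: countable subcover of the half-radius balls
  obtain ⟨e, hcov2⟩ : ∃ e : ℕ → X, ⋃ l : ℕ, ball (e l) (δf (e l) / 2) = Set.univ := by
    obtain ⟨Tset, hTc, hTeq⟩ := TopologicalSpace.isOpen_iUnion_countable
      (fun ξ : X => ball ξ (δf ξ/2)) (fun ξ => isOpen_ball)
    have huniv : ⋃ ξ : X, ball ξ (δf ξ/2) = Set.univ := by
      rw [Set.eq_univ_iff_forall]
      exact fun x => Set.mem_iUnion.mpr ⟨x, mem_ball_self (by linarith [(hδf x).1])⟩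
    have hTne : Tset.Nonempty := by
      rcases Set.eq_empty_or_nonempty Tset with h | h
      · exfalso
        rw [h] at hTeq
        simp only [Set.mem_empty_iff_false, Set.iUnion_of_empty, Set.iUnion_empty] at hTeq
        obtain ⟨x⟩ := (inferInstance : Nonempty X)
        have : x ∈ (∅ : Set X) := by
          rw [hTeq, huniv]; trivial
        exact this
      · exact h
    obtain ⟨e, he⟩ := hTc.exists_eq_range hTne
    refine ⟨e, ?_⟩
    have : ⋃ ξ ∈ Tset, ball ξ (δf ξ/2) = ⋃ l : ℕ, ball (e l) (δf (e l) / 2) := by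
      rw [he, Set.biUnion_range]
    rw [← this, hTeq, huniv]
  -- choose L: mass of accumulated half-balls
  obtain ⟨L, hacc⟩ : ∃ L : ℕ, ENNReal.ofReal (1-θ)
      < P m xs (Set.accumulate (fun l => ball (e l) (δf (e l) / 2)) L) := by
    have htacc := MeasureTheory.tendsto_measure_iUnion_accumulate
      (μ := P m xs) (f := fun l : ℕ => ball (e l) (δf (e l) / 2))
    rw [hcov2] at htacc
    have huniv1 : P m xs Set.univ = 1 := measure_univ
    rw [huniv1] at htacc
    have hlt1 : ENNReal.ofReal (1-θ) < 1 := ENNReal.ofReal_lt_one.mpr (by linarith)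
    exact (htacc.eventually (eventually_gt_nhds hlt1)).exists
  set n := L + 1 with hn_def
  set δi : ℕ → ℝ := fun i => δf (e i) with hδi_def
  have hδi_pos : ∀ i, 0 < δi i := fun i => (hδf (e i)).1
  have hδi_le : ∀ i, δi i ≤ r₀/2 := fun i => (hδf (e i)).2
  set ψ : ℕ → X → ℝ := fun i v => max 0 (min 1 (2 - (2 / δi i) * dist v (e i))) with hψ_def
  set φ : ℕ → X → ℝ := fun i v => ψ i v * ∏ l ∈ Finset.range i, (1 - ψ l v) with hφ_def
  have hψ0 : ∀ i v, 0 ≤ ψ i v := fun i v => le_max_left 0 _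
  have hψle1 : ∀ i v, ψ i v ≤ 1 := fun i v => max_le zero_le_one (min_le_left 1 _)
  have hψcont : ∀ i, Continuous (ψ i) := by
    intro i
    apply continuous_const.max
    apply continuous_const.min
    exact continuous_const.sub (continuous_const.mul (continuous_id.dist continuous_const))
  have hψeq1 : ∀ i v, dist v (e i) ≤ δi i / 2 → ψ i v = 1 := by
    intro i v hv
    have h2 : (2/δi i) * dist v (e i) ≤ 1 := by
      have h4 := mul_le_mul_of_nonneg_left hv (le_of_lt (div_pos two_pos (hδi_pos i)))
      have hne' : δi i ≠ 0 := (hδi_pos i).ne'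
      have h5 : (2/δi i) * (δi i / 2) = 1 := by field_simp
      linarith
    have h3 : (1:ℝ) ≤ 2 - (2/δi i) * dist v (e i) := by linarith
    show max 0 (min 1 (2 - (2 / δi i) * dist v (e i))) = 1
    rw [min_eq_left h3, max_eq_right zero_le_one]
  have hψsupp : ∀ i v, ψ i v ≠ 0 → dist v (e i) < δi i := by
    intro i v hv
    by_contra h
    push_neg at h
    apply hv
    have h2 : 2 - (2/δi i) * dist v (e i) ≤ 0 := by
      have h3 : (2/δi i) * δi i ≤ (2/δi i) * dist v (e i) :=
        mul_le_mul_of_nonneg_left h (le_of_lt (div_pos two_pos (hδi_pos i)))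
      rw [div_mul_cancel₀ (2:ℝ) (hδi_pos i).ne'] at h3
      linarith
    show max 0 (min 1 (2 - (2 / δi i) * dist v (e i))) = 0
    rw [max_eq_left (min_le_of_right_le h2)]
  have hφ0 : ∀ i v, 0 ≤ φ i v := by
    intro i v
    exact mul_nonneg (hψ0 i v) (Finset.prod_nonneg fun l _ => by linarith [hψle1 l v])
  have hφleψ : ∀ i v, φ i v ≤ ψ i v := by
    intro i v
    have h1 : ∏ l ∈ Finset.range i, (1 - ψ l v) ≤ 1 :=
      Finset.prod_le_one (fun l _ => by linarith [hψle1 l v]) (fun l _ => by linarith [hψ0 l v])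
    calc φ i v = ψ i v * ∏ l ∈ Finset.range i, (1 - ψ l v) := rfl
      _ ≤ ψ i v * 1 := mul_le_mul_of_nonneg_left h1 (hψ0 i v)
      _ = ψ i v := mul_one _
  have hφcont : ∀ i, Continuous (φ i) := by
    intro i
    exact (hψcont i).mul (continuous_finset_prod _ (fun l _ => continuous_const.sub (hψcont l)))
  have hφb : ∀ i, ∀ v, |φ i v| ≤ 1 :=
    fun i v => abs_le.mpr ⟨by linarith [hφ0 i v], le_trans (hφleψ i v) (hψle1 i v)⟩
  have hsumφ : ∀ (k : ℕ) (v : X), ∑ i ∈ Finset.range k, φ i v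
      = 1 - ∏ i ∈ Finset.range k, (1 - ψ i v) := by
    intro k v
    induction k with
    | zero => simp
    | succ k ih =>
      rw [Finset.sum_range_succ, Finset.prod_range_succ, ih]
      show _ = 1 - (∏ l ∈ Finset.range k, (1 - ψ l v)) * (1 - ψ k v)
      ring
  have hsum01 : ∀ v : X, 0 ≤ ∑ i ∈ Finset.range n, φ i v ∧ ∑ i ∈ Finset.range n, φ i v ≤ 1 := by
    intro v
    constructor
    · exact Finset.sum_nonneg fun i _ => hφ0 i v
    · rw [hsumφ]
      have h1 : 0 ≤ ∏ i ∈ Finset.range n, (1 - ψ i v) :=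
        Finset.prod_nonneg fun l _ => by linarith [hψle1 l v]
      linarith
  have hsum1 : ∀ v : X, v ∈ Set.accumulate (fun l => ball (e l) (δf (e l) / 2)) L →
      ∑ i ∈ Finset.range n, φ i v = 1 := by
    intro v hv
    rw [Set.mem_accumulate] at hv
    obtain ⟨l, hl, hball⟩ := hv
    have hψl : ψ l v = 1 := hψeq1 l v (le_of_lt (mem_ball.mp hball))
    have hzero : ∏ i ∈ Finset.range n, (1 - ψ i v) = 0 :=
      Finset.prod_eq_zero (Finset.mem_range.mpr (Nat.lt_succ_of_le hl)) (by rw [hψl]; ring)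
    rw [hsumφ, hzero]
    ring
  -- threshold time
  set Tmax := ∑ i ∈ Finset.range n, Tf (e i) with hTmax_def
  have hTf0 : ∀ i : ℕ, 0 ≤ Tf (e i) := fun i => hTf (e i)
  have hTmax0 : 0 ≤ Tmax := Finset.sum_nonneg fun i _ => hTf0 i
  have hTmaxge : ∀ i ∈ Finset.range n, Tf (e i) ≤ Tmax :=
    fun i hi => Finset.single_le_sum (fun l _ => hTf0 l) hi
  -- the comparison function
  set Ψ : X → ℝ := fun y => (∑ i ∈ Finset.range n, (uFn P f c (e i) + η) * PfR P m (φ i) y)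
      + M * (1 - ∑ i ∈ Finset.range n, PfR P m (φ i) y) with hΨ_def
  have hPmφcont : ∀ i, Continuous (fun y => PfR P m (φ i) y) :=
    fun i => (hFeller m hm0 (φ i) (hφcont i) ⟨1, hφb i⟩).1
  have hΨcont : Continuous Ψ := by
    apply Continuous.add
    · exact continuous_finset_sum _ (fun i _ => continuous_const.mul (hPmφcont i))
    · exact continuous_const.mul (continuous_const.sub
        (continuous_finset_sum _ (fun i _ => hPmφcont i)))
  -- the key domination estimate
  have hkey : ∀ y : X, ∀ t : ℝ, m + Tmax ≤ t → |PfR P t f y - c| ≤ Ψ y := by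
    intro y t hty
    haveI := prob_kernel hP hm0 y
    have htm0 : 0 ≤ t - m := by linarith
    have htmT : Tmax ≤ t - m := by linarith
    have hdecomp : PfR P t f y = PfR P m (fun v => PfR P (t-m) f v) y := by
      have h1 := PfR_add hP hm0 htm0 hf hfb y
      rwa [show m + (t - m) = t from by ring] at h1
    have hPtm_cont : Continuous (fun v => PfR P (t-m) f v) :=
      (hFeller (t-m) htm0 f hf ⟨C₀, hfb⟩).1
    set D : X → ℝ := fun v => |PfR P (t-m) f v - c| with hD_def
    have hDcont : Continuous D := (hPtm_cont.sub continuous_const).abs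
    have hDb : ∀ v, D v ≤ M := fun v => hd_bdd (t-m) htm0 v
    have hD0 : ∀ v, 0 ≤ D v := fun v => abs_nonneg _
    have hDabs : ∀ v, |D v| ≤ M := fun v => by rw [abs_of_nonneg (hD0 v)]; exact hDb v
    have hpt : ∀ v, D v ≤ (∑ i ∈ Finset.range n, (uFn P f c (e i) + η) * φ i v)
        + M * (1 - ∑ i ∈ Finset.range n, φ i v) := by
      intro v
      have e1 : D v = (∑ i ∈ Finset.range n, φ i v * D v)
          + (1 - ∑ i ∈ Finset.range n, φ i v) * D v := by
        rw [← Finset.sum_mul]; ring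
      rw [e1]
      apply add_le_add
      · apply Finset.sum_le_sum
        intro i hi
        by_cases hφz : φ i v = 0
        · rw [hφz, zero_mul, mul_zero]
        · have hψz : ψ i v ≠ 0 := by
            intro h
            apply hφz
            show ψ i v * _ = 0
            rw [h, zero_mul]
          have hball : v ∈ ball (e i) (δi i) := mem_ball.mpr (hψsupp i v hψz)
          have hbound := hbdf (e i) (t-m) (le_trans (hTmaxge i hi) htmT) v hball
          calc φ i v * D v ≤ φ i v * (uFn P f c (e i) + η) :=
              mul_le_mul_of_nonneg_left hbound (hφ0 i v)
            _ = (uFn P f c (e i) + η) * φ i v := mul_comm _ _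
      · have h1 : 0 ≤ 1 - ∑ i ∈ Finset.range n, φ i v := by linarith [(hsum01 v).2]
        calc (1 - ∑ i ∈ Finset.range n, φ i v) * D v
            ≤ (1 - ∑ i ∈ Finset.range n, φ i v) * M := mul_le_mul_of_nonneg_left (hDb v) h1
          _ = M * (1 - ∑ i ∈ Finset.range n, φ i v) := mul_comm _ _
    have hIφ : ∀ i : ℕ, Integrable (φ i) (P m y) :=
      fun i => StmtAux.integrable_of_bdd (hφcont i).measurable (hφb i)
    have hID : Integrable D (P m y) := StmtAux.integrable_of_bdd hDcont.measurable hDabs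
    have step1 : PfR P t f y - c = ∫ v, (PfR P (t-m) f v - c) ∂ (P m y) := by
      rw [hdecomp]
      show (∫ v, PfR P (t-m) f v ∂ (P m y)) - c = _
      rw [integral_sub (StmtAux.integrable_of_bdd hPtm_cont.measurable
        (fun v => PfR_bdd hP htm0 hfb v)) (integrable_const c), integral_const]
      simp [measure_univ]
    have step2 : |PfR P t f y - c| ≤ ∫ v, D v ∂ (P m y) := by
      rw [step1]
      calc |∫ v, (PfR P (t-m) f v - c) ∂ (P m y)|
          = ‖∫ v, (PfR P (t-m) f v - c) ∂ (P m y)‖ := (Real.norm_eq_abs _).symm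
        _ ≤ ∫ v, ‖PfR P (t-m) f v - c‖ ∂ (P m y) := norm_integral_le_integral_norm _
        _ = ∫ v, D v ∂ (P m y) := by simp only [Real.norm_eq_abs, hD_def]
    have hI1 : Integrable (fun v => ∑ i ∈ Finset.range n, (uFn P f c (e i) + η) * φ i v)
        (P m y) := integrable_finset_sum _ (fun i _ => (hIφ i).const_mul _)
    have hIsub : Integrable (fun v => 1 - ∑ i ∈ Finset.range n, φ i v) (P m y) :=
      (integrable_const (1:ℝ)).sub (integrable_finset_sum _ (fun i _ => hIφ i))
    have hI2 : Integrable (fun v => M * (1 - ∑ i ∈ Finset.range n, φ i v)) (P m y) :=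
      hIsub.const_mul M
    have hIbound : Integrable (fun v => (∑ i ∈ Finset.range n, (uFn P f c (e i) + η) * φ i v)
        + M * (1 - ∑ i ∈ Finset.range n, φ i v)) (P m y) := hI1.add hI2
    have step3 : ∫ v, D v ∂ (P m y)
        ≤ ∫ v, ((∑ i ∈ Finset.range n, (uFn P f c (e i) + η) * φ i v)
          + M * (1 - ∑ i ∈ Finset.range n, φ i v)) ∂ (P m y) :=
      integral_mono hID hIbound hpt
    have step4 : ∫ v, ((∑ i ∈ Finset.range n, (uFn P f c (e i) + η) * φ i v)
        + M * (1 - ∑ i ∈ Finset.range n, φ i v)) ∂ (P m y) = Ψ y := by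
      rw [integral_add hI1 hI2]
      congr 1
      · rw [integral_finset_sum _ (fun i _ => (hIφ i).const_mul _)]
        exact Finset.sum_congr rfl (fun i _ => integral_const_mul _ _)
      · rw [integral_const_mul]
        congr 1
        rw [integral_sub (integrable_const (1:ℝ)) (integrable_finset_sum _ (fun i _ => hIφ i)),
          integral_const, integral_finset_sum _ (fun i _ => hIφ i)]
        simp only [measure_univ, ENNReal.toReal_one, probReal_univ, smul_eq_mul, one_mul]
        rfl
    calc |PfR P t f y - c| ≤ ∫ v, D v ∂ (P m y) := step2
      _ ≤ _ := step3
      _ = Ψ y := step4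
  -- uFn xs ≤ Ψ xs + σ
  have hΨxs : uFn P f c xs ≤ Ψ xs + σ := by
    obtain ⟨δc, hδcpos, hδcball⟩ := Metric.continuousAt_iff.mp hΨcont.continuousAt σ hσpos
    apply csInf_le (AAset_bddBelow P f c xs)
    refine ⟨δc, hδcpos, m + Tmax, fun t ht y hy => ?_⟩
    have h1 := hkey y t ht
    have h2 : dist (Ψ y) (Ψ xs) < σ := hδcball (mem_ball.mp hy)
    rw [Real.dist_eq] at h2
    have h3 := (abs_lt.mp h2).2
    linarith
  -- the weights
  set ci : ℕ → ℝ := fun i => PfR P m (φ i) xs with hci_def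
  have hci0 : ∀ i, 0 ≤ ci i := fun i => integral_nonneg (hφ0 i)
  have hIφxs : ∀ i : ℕ, Integrable (φ i) (P m xs) :=
    fun i => StmtAux.integrable_of_bdd (hφcont i).measurable (hφb i)
  have hsum_int : ∀ s : Finset ℕ, ∑ i ∈ s, ci i = ∫ v, (∑ i ∈ s, φ i v) ∂ (P m xs) := by
    intro s
    rw [integral_finset_sum _ (fun i _ => hIφxs i)]
    exact Finset.sum_congr rfl fun i _ => rfl
  have hIsum : ∀ s : Finset ℕ, Integrable (fun v => ∑ i ∈ s, φ i v) (P m xs) :=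
    fun s => integrable_finset_sum _ (fun i _ => hIφxs i)
  have hcisum_le : ∑ i ∈ Finset.range n, ci i ≤ 1 := by
    rw [hsum_int]
    calc ∫ v, (∑ i ∈ Finset.range n, φ i v) ∂ (P m xs)
        ≤ ∫ _, (1:ℝ) ∂ (P m xs) :=
          integral_mono (hIsum _) (integrable_const 1) (fun v => (hsum01 v).2)
      _ = 1 := by rw [integral_const]; simp [measure_univ]
  have hAccMeas : MeasurableSet (Set.accumulate (fun l => ball (e l) (δf (e l) / 2)) L) := by
    rw [Set.accumulate_def]
    exact MeasurableSet.iUnion fun l => MeasurableSet.iUnion fun _ => measurableSet_ball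
  have htoReal : 1 - θ
      ≤ (P m xs (Set.accumulate (fun l => ball (e l) (δf (e l) / 2)) L)).toReal := by
    rcases le_or_gt (1-θ) 0 with h | h
    · exact le_trans h ENNReal.toReal_nonneg
    · have h2 := (ENNReal.ofReal_lt_iff_lt_toReal h.le (measure_ne_top _ _)).mp hacc
      linarith
  have hcisum_ge : 1 - θ ≤ ∑ i ∈ Finset.range n, ci i := by
    rw [hsum_int]
    have hind : ∀ v, Set.indicator (Set.accumulate (fun l => ball (e l) (δf (e l) / 2)) L)
        (fun _ => (1:ℝ)) v ≤ ∑ i ∈ Finset.range n, φ i v := by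
      intro v
      by_cases hv : v ∈ Set.accumulate (fun l => ball (e l) (δf (e l) / 2)) L
      · rw [Set.indicator_of_mem hv]; exact le_of_eq (hsum1 v hv).symm
      · rw [Set.indicator_of_notMem hv]; exact (hsum01 v).1
    have heq : ∫ v, Set.indicator (Set.accumulate (fun l => ball (e l) (δf (e l) / 2)) L)
        (fun _ => (1:ℝ)) v ∂ (P m xs)
        = (P m xs (Set.accumulate (fun l => ball (e l) (δf (e l) / 2)) L)).toReal := by
      exact integral_indicator_one hAccMeas
    calc 1 - θ ≤ (P m xs (Set.accumulate (fun l => ball (e l) (δf (e l) / 2)) L)).toReal :=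
          htoReal
      _ = ∫ v, Set.indicator (Set.accumulate (fun l => ball (e l) (δf (e l) / 2)) L)
          (fun _ => (1:ℝ)) v ∂ (P m xs) := heq.symm
      _ ≤ ∫ v, (∑ i ∈ Finset.range n, φ i v) ∂ (P m xs) :=
          integral_mono ((integrable_const (1:ℝ)).indicator hAccMeas) (hIsum _) hind
  -- bad indices avoid the support of g
  set bad : Finset ℕ := (Finset.range n).filter (fun i => ¬ uFn P f c (e i) < a) with hbad_def
  set good : Finset ℕ := (Finset.range n).filter (fun i => uFn P f c (e i) < a) with hgood_def
  have hptbad : ∀ v, (∑ i ∈ bad, φ i v) + g v ≤ 1 := by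
    intro v
    by_cases hgv : g v = 0
    · rw [hgv]
      have h1 : ∑ i ∈ bad, φ i v ≤ ∑ i ∈ Finset.range n, φ i v :=
        Finset.sum_le_sum_of_subset_of_nonneg (Finset.filter_subset _ _) (fun i _ _ => hφ0 i v)
      linarith [(hsum01 v).2]
    · have hdist : dist v p < 3*r₀/2 := hgsupp v hgv
      have hzero : ∑ i ∈ bad, φ i v = 0 := by
        apply Finset.sum_eq_zero
        intro i hi
        by_contra hφz
        have hψz : ψ i v ≠ 0 := by
          intro h
          apply hφz
          show ψ i v * _ = 0
          rw [h, zero_mul]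
        have h1 : dist v (e i) < δi i := hψsupp i v hψz
        have h2 : ¬ uFn P f c (e i) < a := by
          have := Finset.mem_filter.mp hi
          exact this.2
        have h3 : ¬ dist (e i) p < 2*r₀ := fun hh => h2 (hball2 (e i) hh)
        push_neg at h3
        have h4 : dist (e i) p ≤ dist (e i) v + dist v p := dist_triangle _ _ _
        rw [dist_comm (e i) v] at h4
        have h5 : δi i ≤ r₀/2 := hδi_le i
        linarith
      rw [hzero]
      linarith [hg1' v]
  have hbadsum : ∑ i ∈ bad, ci i ≤ 1 - (κ - θ) := by
    have h2 : ∑ i ∈ bad, ci i + PfR P m g xs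
        = ∫ v, ((∑ i ∈ bad, φ i v) + g v) ∂ (P m xs) := by
      rw [integral_add (hIsum bad) (StmtAux.integrable_of_bdd hgcont.measurable hgb),
        ← hsum_int]
      rfl
    have h3 : ∫ v, ((∑ i ∈ bad, φ i v) + g v) ∂ (P m xs) ≤ 1 := by
      calc ∫ v, ((∑ i ∈ bad, φ i v) + g v) ∂ (P m xs) ≤ ∫ _, (1:ℝ) ∂ (P m xs) :=
            integral_mono ((hIsum bad).add
              (StmtAux.integrable_of_bdd hgcont.measurable hgb)) (integrable_const 1) hptbad
        _ = 1 := by rw [integral_const]; simp [measure_univ]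
    have h4 : ∑ i ∈ bad, ci i + PfR P m g xs ≤ 1 := by rw [h2]; exact h3
    linarith
  have hsplit : ∑ i ∈ good, ci i + ∑ i ∈ bad, ci i = ∑ i ∈ Finset.range n, ci i :=
    Finset.sum_filter_add_sum_filter_not _ _ _
  have hgood0 : 0 ≤ ∑ i ∈ good, ci i := Finset.sum_nonneg fun i _ => hci0 i
  have hbad0 : 0 ≤ ∑ i ∈ bad, ci i := Finset.sum_nonneg fun i _ => hci0 i
  have hgoodge : κ - 2*θ ≤ ∑ i ∈ good, ci i := by linarith
  -- bound Ψ xs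
  have hΨbound : Ψ xs ≤ η + M*θ + S - (κ - 2*θ) * (S/2) := by
    have hΨeq : Ψ xs = (∑ i ∈ Finset.range n, (uFn P f c (e i) + η) * ci i)
        + M * (1 - ∑ i ∈ Finset.range n, ci i) := rfl
    have hsplitterm : ∑ i ∈ Finset.range n, (uFn P f c (e i) + η) * ci i
        = ∑ i ∈ good, (uFn P f c (e i) + η) * ci i
          + ∑ i ∈ bad, (uFn P f c (e i) + η) * ci i :=
      (Finset.sum_filter_add_sum_filter_not _ _ _).symm
    have hgoodterm : ∑ i ∈ good, (uFn P f c (e i) + η) * ci i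
        ≤ (a + η) * ∑ i ∈ good, ci i := by
      rw [Finset.mul_sum]
      apply Finset.sum_le_sum
      intro i hi
      have h1 : uFn P f c (e i) < a := (Finset.mem_filter.mp hi).2
      exact mul_le_mul_of_nonneg_right (by linarith) (hci0 i)
    have hbadterm : ∑ i ∈ bad, (uFn P f c (e i) + η) * ci i
        ≤ (S + η) * ∑ i ∈ bad, ci i := by
      rw [Finset.mul_sum]
      apply Finset.sum_le_sum
      intro i _
      exact mul_le_mul_of_nonneg_right (by linarith [hSle (e i)]) (hci0 i)
    have hMterm : M * (1 - ∑ i ∈ Finset.range n, ci i) ≤ M * θ :=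
      mul_le_mul_of_nonneg_left (by linarith) hM0
    refine arith_bound (G := ∑ i ∈ good, ci i) (B := ∑ i ∈ bad, ci i)
      (Ct := ∑ i ∈ Finset.range n, ci i) (T1 := ∑ i ∈ Finset.range n, (uFn P f c (e i) + η) * ci i)
      hΨeq ?_ hsplit hcisum_le hcisum_ge hgood0 hbad0 hgoodge hSpos hηpos hM0
    rw [hsplitterm]
    have haS : a = S/2 := ha_def
    rw [← haS]
    exact add_le_add hgoodterm hbadterm
  -- final contradiction
  clear_value S a σ η θ κ Ψ ci
  have hfinal1 : S - σ < Ψ xs + σ := lt_of_lt_of_le hxs hΨxs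
  have h5 : κ*S/4 ≤ (κ - 2*θ)*(S/2) := by
    have haux : 0 ≤ S * (κ/4 - θ) := mul_nonneg hSpos.le (by linarith)
    nlinarith [haux]
  have h6 : κ*S/4 < 2*σ + η + M*θ := by linarith [hfinal1, hΨbound, h5]
  have h7 : 2*σ + η + M*θ ≤ 3*(κ*S)/16 := by
    have h8 : 2*σ = κ*S/16 := by rw [hσ_def]; ring
    have h9 : η = κ*S/16 := hη_def
    linarith [hθM]
  have h10 : 3*(κ*S)/16 < κ*S/4 := by
    have haux : 0 < κ * S := mul_pos hκpos hSpos
    linarith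
  linarith

end StmtU

/-- for `T = [0,∞)`, a Feller, strongly continuous, asymptotically
stable Markov semigroup whose unique invariant measure `μ*` has support with nonempty
interior satisfies the e-property at every point of `X`. -/
theorem stmt16 {X : Type*} [MetricSpace X] [CompleteSpace X]
    [TopologicalSpace.SeparableSpace X] [MeasurableSpace X] [BorelSpace X]
    (P : ℝ → X → Measure X) (hP : IsMarkovSemigroupR P) (hFeller : FellerR P)
    (hsc : StrongContR P) (μs : Measure X) (hstab : AsympStableR P μs)
    (hint : (interior (msupp μs)).Nonempty) :
    ∀ z : X, EPropR P z := by
  intro z f hfL ε hε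
  obtain ⟨⟨K, hK⟩, C₀, hC₀⟩ := hfL
  have hf : Continuous f := hK.continuous
  haveI hμprob : IsProbabilityMeasure μs := hstab.1
  set c := ∫ v, f v ∂μs with hc_def
  have hcb : |c| ≤ C₀ := StmtAux.abs_integral_le hC₀
  have hne : (StmtU.AAset P f c z).Nonempty := by
    refine ⟨C₀ + C₀, 1, one_pos, 0, fun t ht y _ => ?_⟩
    calc |PfR P t f y - c| ≤ |PfR P t f y| + |c| := abs_sub _ _
      _ ≤ C₀ + C₀ := add_le_add (StmtSgp.PfR_bdd hP ht hC₀ y) hcb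
  have huz := StmtU.uFn_le_zero hP hFeller hstab hint hf hC₀ z
  have hlt : StmtU.uFn P f c z < ε/8 := lt_of_le_of_lt huz (by linarith)
  obtain ⟨a', ha'mem, ha'lt⟩ := exists_lt_of_csInf_lt hne hlt
  obtain ⟨δ₁, hδ₁pos, T, hT⟩ := ha'mem
  set T' := max T 0 with hT'_def
  have hT'0 : 0 ≤ T' := le_max_right _ _
  obtain ⟨η₀, hη₀pos, hη₀⟩ := hsc f hf ⟨C₀, hC₀⟩ (ε/8) (by linarith)
  set h := η₀/2 with hh_def
  have hhpos : 0 < h := by rw [hh_def]; linarith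
  set N : ℕ := ⌈T'/h⌉₊ with hN_def
  have hgrid : ∀ i : ℕ, ∃ δ > (0:ℝ), ∀ y, dist y z < δ →
      |PfR P (i*h) f y - PfR P (i*h) f z| < ε/2 := by
    intro i
    have hih0 : (0:ℝ) ≤ (i:ℝ)*h := mul_nonneg (Nat.cast_nonneg i) hhpos.le
    have hcont : Continuous fun y => PfR P ((i:ℝ)*h) f y :=
      (hFeller ((i:ℝ)*h) hih0 f hf ⟨C₀, hC₀⟩).1
    obtain ⟨δ, hδpos, hδ⟩ :=
      Metric.continuousAt_iff.mp hcont.continuousAt (ε/2) (by linarith)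
    refine ⟨δ, hδpos, fun y hy => ?_⟩
    have := hδ (show dist y z < δ from hy)
    rwa [Real.dist_eq] at this
  choose δg hδgpos hδg using hgrid
  have hrangene : (Finset.range (N+1)).Nonempty := ⟨0, Finset.mem_range.mpr (Nat.succ_pos N)⟩
  set δ₂ := (Finset.range (N+1)).inf' hrangene δg with hδ₂_def
  have hδ₂pos : 0 < δ₂ := by
    rw [hδ₂_def, Finset.lt_inf'_iff]
    exact fun i _ => hδgpos i
  refine ⟨min δ₁ δ₂, lt_min hδ₁pos hδ₂pos, fun x hx t ht0 => ?_⟩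
  have hxδ₁ : dist x z < δ₁ := lt_of_lt_of_le hx (min_le_left _ _)
  have hxδ₂ : dist x z < δ₂ := lt_of_lt_of_le hx (min_le_right _ _)
  rcases le_or_gt T' t with hcase | hcase
  · -- large time regime
    have htT : T ≤ t := le_trans (le_max_left T 0) hcase
    have h1 := hT t htT x (mem_ball.mpr hxδ₁)
    have h2 := hT t htT z (mem_ball_self hδ₁pos)
    calc |PfR P t f x - PfR P t f z|
        = |(PfR P t f x - c) - (PfR P t f z - c)| := by ring_nf
      _ ≤ |PfR P t f x - c| + |PfR P t f z - c| := abs_sub _ _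
      _ < ε := by linarith
  · -- finite time regime via the grid
    set i : ℕ := ⌊t/h⌋₊ with hi_def
    have hdiv0 : 0 ≤ t/h := div_nonneg ht0 hhpos.le
    have hile : (i:ℝ)*h ≤ t := by
      have h1 : (i:ℝ) ≤ t/h := Nat.floor_le hdiv0
      calc (i:ℝ)*h ≤ (t/h)*h := mul_le_mul_of_nonneg_right h1 hhpos.le
        _ = t := by field_simp
    have hslt : t - (i:ℝ)*h < h := by
      have h1 : t/h < (i:ℝ) + 1 := Nat.lt_floor_add_one _
      have h2 : t < ((i:ℝ)+1)*h := by
        calc t = (t/h)*h := by field_simp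
          _ < ((i:ℝ)+1)*h := mul_lt_mul_of_pos_right h1 hhpos
      linarith [h2]
    have hiN : i ∈ Finset.range (N+1) := by
      rw [Finset.mem_range, Nat.lt_succ_iff, hi_def, hN_def]
      calc ⌊t/h⌋₊ ≤ ⌊T'/h⌋₊ :=
            Nat.floor_le_floor ((div_le_div_iff_of_pos_right hhpos).mpr hcase.le)
        _ ≤ ⌈T'/h⌉₊ := Nat.floor_le_ceil _
    have hδ₂le : δ₂ ≤ δg i := Finset.inf'_le _ hiN
    have hgridbound : |PfR P ((i:ℝ)*h) f x - PfR P ((i:ℝ)*h) f z| < ε/2 :=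
      hδg i x (lt_of_lt_of_le hxδ₂ hδ₂le)
    have hih0 : (0:ℝ) ≤ (i:ℝ)*h := mul_nonneg (Nat.cast_nonneg i) hhpos.le
    rcases eq_or_lt_of_le hile with heq | hltih
    · rw [← heq]
      linarith [hgridbound]
    · have hspos : 0 < t - (i:ℝ)*h := by linarith
      have hsmall : ∀ v, |PfR P (t - (i:ℝ)*h) f v - f v| ≤ ε/8 :=
        fun v => le_of_lt (hη₀ (t - (i:ℝ)*h) hspos
          (lt_of_lt_of_le hslt (by rw [hh_def]; linarith)) v)
      have hhopx := StmtSgp.PfR_hop hP hFeller hih0 hspos.le hf hC₀ hsmall x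
      have hhopz := StmtSgp.PfR_hop hP hFeller hih0 hspos.le hf hC₀ hsmall z
      rw [show (i:ℝ)*h + (t - (i:ℝ)*h) = t from by ring] at hhopx hhopz
      calc |PfR P t f x - PfR P t f z|
          = |(PfR P t f x - PfR P ((i:ℝ)*h) f x)
            + (PfR P ((i:ℝ)*h) f x - PfR P ((i:ℝ)*h) f z)
            - (PfR P t f z - PfR P ((i:ℝ)*h) f z)| := by ring_nf
        _ ≤ |(PfR P t f x - PfR P ((i:ℝ)*h) f x)
            + (PfR P ((i:ℝ)*h) f x - PfR P ((i:ℝ)*h) f z)|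
            + |PfR P t f z - PfR P ((i:ℝ)*h) f z| := abs_sub _ _
        _ ≤ |PfR P t f x - PfR P ((i:ℝ)*h) f x|
            + |PfR P ((i:ℝ)*h) f x - PfR P ((i:ℝ)*h) f z|
            + |PfR P t f z - PfR P ((i:ℝ)*h) f z| := by
              linarith [abs_add_le (PfR P t f x - PfR P ((i:ℝ)*h) f x)
                (PfR P ((i:ℝ)*h) f x - PfR P ((i:ℝ)*h) f z)]
        _ < ε := by linarith [hhopx, hhopz, hgridbound]
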